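/- Let σ: F_8 × F_8 → {±1} be σ(x,y) = (-1)^{φ(x,y)} with φ(x,y) = tr(y·x^6), and let O be the 8-dimensional real algebra with basis {e^x : x ∈ F_8} and multiplication e^x · e^y = σ(x,y) e^{x+y}. For a = Σ a_x e^x define the conjugate a* = a_0 e^0 − Σ_{x≠0} a_x e^x. Then (ab)* = b* a* for all a, b ∈ O. -/

import Mathlib

open scoped Classical
noncomputable section

abbrev F8 := GaloisField 2 3

instance : Fintype F8 := Fintype.ofFinite F8

def tr (x : F8) : F8 := x + x ^ 2 + x ^ 4

/-- The sign `(-1)^{φ(x,y)}` where `φ(x,y) = tr(y x⁶)`. -/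
def sgn (x y : F8) : ℝ := if tr (y * x ^ 6) = 0 then 1 else -1

/-- Multiplication of the twisted group algebra `ℝ_σ[F₈]`, on coordinates:
octonions are functions `F8 → ℝ`, and `e^x e^y = (-1)^{tr(y x⁶)} e^{x+y}`. -/
def omul (a b : F8 → ℝ) : F8 → ℝ := fun z => ∑ x : F8, sgn x (z + x) * a x * b (z + x)

/-- The basis element `e^x`. -/
def e (x : F8) : F8 → ℝ := fun w => if w = x then 1 else 0

/-- Octonion conjugation: `a* = Re(a) - Im(a)`. -/
def conj (a : F8 → ℝ) : F8 → ℝ := fun w => if w = 0 then a 0 else - a w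

/-- The norm `N(a) = Σ aₓ²`. -/
def N (a : F8 → ℝ) : ℝ := ∑ x : F8, (a x) ^ 2

lemma two_eq_zero : (2 : F8) = 0 := by exact_mod_cast CharP.cast_eq_zero F8 2

lemma hcard : Fintype.card F8 = 8 := by
  have h := GaloisField.card 2 3 (by norm_num)
  convert h using 2; norm_num
  norm_num

lemma pow8 (x : F8) : x ^ 8 = x := by
  have := FiniteField.pow_card x
  rwa [hcard] at this

lemma tr_sq (x : F8) : tr x * tr x = tr x := by
  unfold tr
  linear_combination pow8 x + (x^3 + x^5 + x^6) * two_eq_zero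

lemma key (s : F8) (hs0 : s ≠ 0) (hs1 : s ≠ 1) : tr (s + s ^ 6) = 1 := by
  have h7 : s ^ 7 = 1 := by
    have h8 := pow8 s
    have : s ^ 7 * s = 1 * s := by rw [one_mul]; linear_combination h8
    exact mul_right_cancel₀ hs0 this
  have hmul : (s - 1) * (tr (s + s ^ 6) - 1) = 0 := by
    unfold tr
    linear_combination (1 + s^3 + s^4 + s^5 + s^6 + s^10 + s^11 + s^17 + s^18) * h7 +
      (1 - s + s^3 + s^5 - s^7 + s^8 - 2*s^9 + 2*s^10 - s^12 - 3*s^14 + 3*s^15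
        - 2*s^19 + 2*s^20 - s^24) * two_eq_zero
  rcases mul_eq_zero.mp hmul with h | h
  · exact absurd (by linear_combination h) hs1
  · exact sub_eq_zero.mp h

lemma tr_add' (a b : F8) : tr a + tr b = tr (a + b) := by
  unfold tr
  linear_combination (-(a*b + 2*a^3*b + 3*a^2*b^2 + 2*a*b^3)) * two_eq_zero

lemma sgn_zero_left (y : F8) : sgn 0 y = 1 := by simp [sgn, tr]

lemma sgn_zero_right (x : F8) : sgn x 0 = 1 := by simp [sgn, tr]

lemma tr_zero_or_one (x : F8) : tr x = 0 ∨ tr x = 1 := by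
  have h := tr_sq x
  rcases mul_eq_zero.mp (show tr x * (tr x - 1) = 0 by linear_combination h) with h' | h'
  · exact Or.inl h'
  · exact Or.inr (sub_eq_zero.mp h')

lemma tr_swap (u v : F8) (hu : u ≠ 0) (hv : v ≠ 0) (huv : u ≠ v) :
    tr (v * u ^ 6) + tr (u * v ^ 6) = 1 := by
  set s := v * u ^ 6 with hs
  have h7 : u ^ 7 = 1 := by
    have h8 := pow8 u
    have : u ^ 7 * u = 1 * u := by rw [one_mul]; linear_combination h8
    exact mul_right_cancel₀ hu this
  have hs0 : s ≠ 0 := mul_ne_zero hv (pow_ne_zero 6 hu)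
  have hs1 : s ≠ 1 := by
    intro h
    apply huv
    have : u = v * u ^ 7 := by rw [pow_succ]; linear_combination u * h.symm
    rw [h7, mul_one] at this
    exact this.symm ▸ rfl
  have h6 : u * v ^ 6 = s ^ 6 := by
    rw [hs]
    linear_combination (-(v^6 * u) * (u^28 + u^21 + u^14 + u^7 + 1)) * h7
  rw [h6, tr_add' s (s ^ 6)]
  exact key s hs0 hs1

lemma sgn_swap (u v : F8) (hu : u ≠ 0) (hv : v ≠ 0) (huv : u ≠ v) :
    sgn u v = - sgn v u := by
  have h := tr_swap u v hu hv huv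
  unfold sgn
  by_cases h1 : tr (v * u ^ 6) = 0
  · rw [if_pos h1, if_neg, neg_neg]
    rw [h1, zero_add] at h
    rw [h]; exact one_ne_zero
  · rw [if_neg h1, if_pos]
    rcases tr_zero_or_one (v * u ^ 6) with h' | h'
    · exact absurd h' h1
    · rw [h'] at h; linear_combination h

lemma add_self (z : F8) : z + z = 0 := by linear_combination z * two_eq_zero

theorem conj_omul (a b : F8 → ℝ) : conj (omul a b) = omul (conj b) (conj a) := by
  funext w
  have reidx : omul (conj b) (conj a) w
      = ∑ x : F8, sgn (w + x) x * conj b (w + x) * conj a x := by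
    unfold omul
    apply Fintype.sum_equiv (Equiv.addLeft w)
    intro x
    have hwx : w + (w + x) = x := by linear_combination w * two_eq_zero
    simp only [Equiv.coe_addLeft, hwx]
  rw [reidx]
  by_cases hw : w = 0
  · subst hw
    simp only [conj, if_pos rfl, omul, zero_add]
    apply Finset.sum_congr rfl
    intro x _
    by_cases hx : x = 0
    · subst hx; simp only [conj, if_pos rfl, if_true]; ring
    · simp only [conj, if_neg hx]; ring
  · have hL : conj (omul a b) w = ∑ x : F8, -(sgn x (w + x) * a x * b (w + x)) := by
      simp only [conj, if_neg hw, omul, Finset.sum_neg_distrib]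
    rw [hL]
    apply Finset.sum_congr rfl
    intro x _
    by_cases hx0 : x = 0
    · subst hx0
      simp only [add_zero, conj, if_pos rfl, if_true, if_neg hw, sgn_zero_left, sgn_zero_right]
      ring
    · by_cases hxw : x = w
      · subst hxw
        simp only [add_self, conj, if_pos rfl, if_true, if_neg hw, sgn_zero_left, sgn_zero_right]
        ring
      · have hwx0 : w + x ≠ 0 := by
          intro h; apply hxw; linear_combination h - w * two_eq_zero
        have hne : w + x ≠ x := by
          intro h; apply hw; linear_combination h
        rw [sgn_swap (w + x) x hwx0 hx0 hne]
        simp only [conj, if_neg hx0, if_neg hwx0]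
        ring
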